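/- ≠-free positive disjunctive Datalog programs cannot capture instance queries mediated by ALCHOI TBoxes with nominals: there exist an ALCHOI TBox T containing a nominal (namely T = {A ⊑ {a}}) and an instance query q such that no positive disjunctive Datalog program P without the ≠ predicate and no predicate q̂ of P satisfy cert((T, ∅, q), A) = cert((P, q̂), A) for all ABoxes A over the concept and role names of T. In particular, (T = {A ⊑ {a}}) is consistent with the ABox {A(a)} but inconsistent with the ABox {A(b)} for an individual b ≠ a. -/

import Mathlib

set_option autoImplicit false
set_option linter.unusedVariables false

/-! # ALCHOI with closed predicates: syntax -/

/-- Basic roles: role names `p` or their inverses `p⁻`. -/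
inductive DLRole : Type
  | name : ℕ → DLRole
  | inv : ℕ → DLRole
  deriving DecidableEq

/-- The inverse `r⁻` of a basic role. -/
def DLRole.invert : DLRole → DLRole
  | .name p => .inv p
  | .inv p => .name p

/-- The underlying role name of a basic role. -/
def DLRole.nameOf : DLRole → ℕ
  | .name p => p
  | .inv p => p

/-- ALCHOI concepts. -/
inductive DLConcept : Type
  | atom : ℕ → DLConcept            -- concept name
  | top : DLConcept
  | bot : DLConcept
  | nom : ℕ → DLConcept             -- nominal {a}
  | neg : DLConcept → DLConcept
  | conj : DLConcept → DLConcept → DLConcept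
  | disj : DLConcept → DLConcept → DLConcept
  | ex : DLRole → DLConcept → DLConcept
  | all : DLRole → DLConcept → DLConcept
  deriving DecidableEq

/-- TBox inclusions: concept inclusions and role inclusions. -/
inductive Inclusion : Type
  | concl : DLConcept → DLConcept → Inclusion
  | rolel : DLRole → DLRole → Inclusion
  deriving DecidableEq

/-- ABox assertions `A(a)`, `p(a,b)` (over concept and role *names*). -/
inductive Assertion : Type
  | ca : ℕ → ℕ → Assertion
  | ra : ℕ → ℕ → ℕ → Assertion
  deriving DecidableEq

abbrev TBox := List Inclusion
abbrev ABox := List Assertion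

/-- A closed predicate is a concept name or a role name. -/
inductive ClosedPred : Type
  | cp : ℕ → ClosedPred
  | rp : ℕ → ClosedPred
  deriving DecidableEq

/-- A knowledge base with closed predicates. -/
structure KB where
  tbox : TBox
  sig : Set ClosedPred
  abox : ABox

/-- Domain elements: named individuals (standard name assumption), fringe
individuals `c^α`, and anonymous elements. -/
inductive Elem : Type
  | ind : ℕ → Elem
  | fringe : ℕ → Inclusion → Elem
  | anon : ℕ → Elem
  deriving DecidableEq

def Elem.isFringe : Elem → Prop
  | .fringe _ _ => True
  | _ => False

/-! # Semantics -/

/-- An interpretation. -/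
structure Interp where
  dom : Set Elem
  dom_nonempty : dom.Nonempty
  intC : ℕ → Set Elem
  intR : ℕ → Set (Elem × Elem)
  intI : ℕ → Elem
  intC_sub : ∀ A, intC A ⊆ dom
  intR_sub : ∀ p, ∀ x ∈ intR p, x.1 ∈ dom ∧ x.2 ∈ dom
  intI_mem : ∀ a, intI a ∈ dom

/-- Extension of a basic role. -/
def Interp.roleExt (I : Interp) : DLRole → Set (Elem × Elem)
  | .name p => I.intR p
  | .inv p => {x | (x.2, x.1) ∈ I.intR p}

/-- Extension of a concept. -/
def Interp.cExt (I : Interp) : DLConcept → Set Elem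
  | .atom A => I.intC A
  | .top => I.dom
  | .bot => ∅
  | .nom a => {I.intI a}
  | .neg C => I.dom \ I.cExt C
  | .conj C D => I.cExt C ∩ I.cExt D
  | .disj C D => I.cExt C ∪ I.cExt D
  | .ex r C => {e | ∃ f, (e, f) ∈ I.roleExt r ∧ f ∈ I.cExt C}
  | .all r C => {e | e ∈ I.dom ∧ ∀ f, (e, f) ∈ I.roleExt r → f ∈ I.cExt C}

def Interp.satIncl (I : Interp) : Inclusion → Prop
  | .concl C D => I.cExt C ⊆ I.cExt D
  | .rolel r s => I.roleExt r ⊆ I.roleExt s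

def Interp.satAssert (I : Interp) : Assertion → Prop
  | .ca A a => I.intI a ∈ I.intC A
  | .ra p a b => (I.intI a, I.intI b) ∈ I.intR p

def Interp.satTBox (I : Interp) (T : TBox) : Prop := ∀ α ∈ T, I.satIncl α

def Interp.satABox (I : Interp) (Ab : ABox) : Prop := ∀ β ∈ Ab, I.satAssert β

/-- `I ⊨_Σ A`: `I` satisfies the ABox, and every membership in a closed
predicate is explicitly asserted. -/
def Interp.satABoxClosed (I : Interp) (sig : Set ClosedPred) (Ab : ABox) : Prop :=
  I.satABox Ab ∧
  (∀ A : ℕ, ClosedPred.cp A ∈ sig → ∀ e ∈ I.intC A,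
      ∃ a : ℕ, e = Elem.ind a ∧ Assertion.ca A a ∈ Ab) ∧
  (∀ p : ℕ, ClosedPred.rp p ∈ sig → ∀ x ∈ I.intR p,
      ∃ a b : ℕ, x = (Elem.ind a, Elem.ind b) ∧ Assertion.ra p a b ∈ Ab)

/-! ## Symbols occurring in a KB -/

def DLConcept.noms : DLConcept → Set ℕ
  | .nom a => {a}
  | .neg C => C.noms
  | .conj C D => C.noms ∪ D.noms
  | .disj C D => C.noms ∪ D.noms
  | .ex _ C => C.noms
  | .all _ C => C.noms
  | _ => ∅

def Inclusion.noms : Inclusion → Set ℕ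
  | .concl C D => C.noms ∪ D.noms
  | .rolel _ _ => ∅

def Assertion.inds : Assertion → Set ℕ
  | .ca _ a => {a}
  | .ra _ a b => {a, b}

/-- The individuals occurring in a KB (nominals of the TBox and individuals
of the ABox). -/
def KB.inds (K : KB) : Set ℕ :=
  (⋃ α ∈ K.tbox, Inclusion.noms α) ∪ ⋃ β ∈ K.abox, Assertion.inds β

def DLConcept.cnames : DLConcept → Set ℕ
  | .atom A => {A}
  | .neg C => C.cnames
  | .conj C D => C.cnames ∪ D.cnames
  | .disj C D => C.cnames ∪ D.cnames
  | .ex _ C => C.cnames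
  | .all _ C => C.cnames
  | _ => ∅

def DLConcept.rnames : DLConcept → Set ℕ
  | .neg C => C.rnames
  | .conj C D => C.rnames ∪ D.rnames
  | .disj C D => C.rnames ∪ D.rnames
  | .ex r C => {r.nameOf} ∪ C.rnames
  | .all r C => {r.nameOf} ∪ C.rnames
  | _ => ∅

def Inclusion.cnames : Inclusion → Set ℕ
  | .concl C D => C.cnames ∪ D.cnames
  | .rolel _ _ => ∅

def Inclusion.rnames : Inclusion → Set ℕ
  | .concl C D => C.rnames ∪ D.rnames
  | .rolel r s => {r.nameOf, s.nameOf}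

def TBox.cnames (T : TBox) : Set ℕ := ⋃ α ∈ T, Inclusion.cnames α
def TBox.rnames (T : TBox) : Set ℕ := ⋃ α ∈ T, Inclusion.rnames α

def Assertion.cnames : Assertion → Set ℕ
  | .ca A _ => {A}
  | .ra _ _ _ => ∅

def Assertion.rnames : Assertion → Set ℕ
  | .ca _ _ => ∅
  | .ra p _ _ => {p}

def KB.cnames (K : KB) : Set ℕ := TBox.cnames K.tbox ∪ ⋃ β ∈ K.abox, Assertion.cnames β
def KB.rnames (K : KB) : Set ℕ := TBox.rnames K.tbox ∪ ⋃ β ∈ K.abox, Assertion.rnames β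

/-- An ABox over the given sets of concept names and role names. -/
def ABoxOver (Ab : ABox) (cns rns : Set ℕ) : Prop :=
  ∀ β ∈ Ab, match β with
    | Assertion.ca A _ => A ∈ cns
    | Assertion.ra p _ _ => p ∈ rns

/-- `I ⊨ K` for a KB with closed predicates: the standard name assumption for
the individuals occurring in `K`, satisfaction of the TBox, and `I ⊨_Σ A`. -/
def isModel (I : Interp) (K : KB) : Prop :=
  (∀ a ∈ K.inds, I.intI a = Elem.ind a ∧ Elem.ind a ∈ I.dom) ∧
  I.satTBox K.tbox ∧
  I.satABoxClosed K.sig K.abox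

/-! # Normal form -/

inductive IsBasicConcept : DLConcept → Prop
  | atom (A : ℕ) : IsBasicConcept (.atom A)
  | top : IsBasicConcept .top
  | bot : IsBasicConcept .bot
  | nom (a : ℕ) : IsBasicConcept (.nom a)

inductive IsConjOfBasic : DLConcept → Prop
  | basic {C : DLConcept} : IsBasicConcept C → IsConjOfBasic C
  | conj {C D : DLConcept} : IsConjOfBasic C → IsConjOfBasic D → IsConjOfBasic (.conj C D)

inductive IsDisjOfBasic : DLConcept → Prop
  | basic {C : DLConcept} : IsBasicConcept C → IsDisjOfBasic C
  | disj {C D : DLConcept} : IsDisjOfBasic C → IsDisjOfBasic D → IsDisjOfBasic (.disj C D)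

/-- Inclusions of shape (N1). -/
def IsN1 : Inclusion → Prop
  | .concl C D => IsConjOfBasic C ∧ IsDisjOfBasic D
  | .rolel _ _ => False

/-- The existential inclusion `A ⊑ ∃r.A'` (shape (N2)). -/
def exIncl (A : ℕ) (r : DLRole) (A' : ℕ) : Inclusion :=
  .concl (.atom A) (.ex r (.atom A'))

def Inclusion.isExistential (α : Inclusion) : Prop := ∃ A r A', α = exIncl A r A'

/-- Inclusions in normal form (N1)--(N4). -/
inductive NormalIncl : Inclusion → Prop
  | n1 {C D : DLConcept} : IsConjOfBasic C → IsDisjOfBasic D → NormalIncl (.concl C D)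
  | n2 (A : ℕ) (r : DLRole) (A' : ℕ) : NormalIncl (exIncl A r A')
  | n3 (A : ℕ) (r : DLRole) (A' : ℕ) : NormalIncl (.concl (.atom A) (.all r (.atom A')))
  | n4 (r s : DLRole) : NormalIncl (.rolel r s)

/-- A TBox in normal form. -/
def NormalTBox (T : TBox) : Prop := ∀ α ∈ T, NormalIncl α

/-! # Role hierarchy and closed roles -/

/-- `r ⊑*_T s`. -/
inductive subRole (T : TBox) : DLRole → DLRole → Prop
  | refl (r : DLRole) : subRole T r r
  | inv {r s : DLRole} : subRole T r s → subRole T r.invert s.invert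
  | step {r r₁ s : DLRole} : subRole T r r₁ → Inclusion.rolel r₁ s ∈ T → subRole T r s

/-- `r ∈_T Σ`: `r ⊑*_T s` for some `s` with `s` or `s⁻` in `Σ`. -/
def roleClosed (T : TBox) (sig : Set ClosedPred) (r : DLRole) : Prop :=
  ∃ s : DLRole, subRole T r s ∧ ClosedPred.rp s.nameOf ∈ sig
/-! # Conjunctive queries -/

/-- Query atoms `A(x)`, `r(x,y)` over variables. -/
inductive QAtom : Type
  | ca : ℕ → ℕ → QAtom
  | ra : ℕ → ℕ → ℕ → QAtom
  deriving DecidableEq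

def QAtom.vars : QAtom → Set ℕ
  | .ca _ x => {x}
  | .ra _ x y => {x, y}

/-- Variables of a set of atoms. -/
def qvarsS (s : Set QAtom) : Set ℕ := ⋃ a ∈ s, QAtom.vars a

/-- A conjunctive query with answer variables `ansVars`; all remaining
variables are existentially quantified. -/
structure CQuery where
  atoms : List QAtom
  ansVars : List ℕ
  ansVars_mem : ∀ x ∈ ansVars, x ∈ qvarsS {a | a ∈ atoms}

def CQuery.atomSet (q : CQuery) : Set QAtom := {a | a ∈ q.atoms}
def CQuery.varSet (q : CQuery) : Set ℕ := qvarsS q.atomSet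

def QAtom.satBy : QAtom → Interp → (ℕ → Elem) → Prop
  | .ca A x, I, π => π x ∈ I.intC A
  | .ra p x y, I, π => (π x, π y) ∈ I.intR p

/-- `I ⊨ q(t)` for a tuple `t` of domain elements: some map `π` of the
variables into the domain sends the answer tuple to `t` and satisfies all
atoms. -/
def Interp.satCQ (I : Interp) (q : CQuery) (t : List Elem) : Prop :=
  ∃ π : ℕ → Elem, (∀ v ∈ q.varSet, π v ∈ I.dom) ∧
    q.ansVars.map π = t ∧ ∀ a ∈ q.atoms, a.satBy I π

/-- `K ⊨ q(t)` for a tuple `t` of individuals. -/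
def KB.entailsCQ (K : KB) (q : CQuery) (t : List ℕ) : Prop :=
  ∀ I : Interp, isModel I K → I.satCQ q (t.map Elem.ind)

/-- An ontology-mediated query. -/
structure OMQ where
  tbox : TBox
  sig : Set ClosedPred
  q : CQuery

def OMQ.kb (Q : OMQ) (Ab : ABox) : KB := ⟨Q.tbox, Q.sig, Ab⟩

/-- `t ∈ cert(Q, A)`: `t` is a tuple (of the query's arity) of individuals
occurring in the KB that is entailed. -/
def certOMQ (Q : OMQ) (Ab : ABox) (t : List ℕ) : Prop :=
  t.length = Q.q.ansVars.length ∧ (∀ a ∈ t, a ∈ (Q.kb Ab).inds) ∧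
  (Q.kb Ab).entailsCQ Q.q t

/-- c-variables of an OMQ. -/
def isCVar (Q : OMQ) (x : ℕ) : Prop :=
  x ∈ Q.q.ansVars ∨
  (∃ p y, (QAtom.ra p x y ∈ Q.q.atoms ∨ QAtom.ra p y x ∈ Q.q.atoms) ∧
      roleClosed Q.tbox Q.sig (.name p)) ∨
  (∃ A, QAtom.ca A x ∈ Q.q.atoms ∧ ClosedPred.cp A ∈ Q.sig)

/-- A c-safe OMQ: all variables of the query are c-variables. -/
def cSafe (Q : OMQ) : Prop := ∀ x ∈ Q.q.varSet, isCVar Q x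

/-! ## Query graph, acyclicity -/

/-- The query (Gaifman) graph of a set of atoms. -/
def queryGraphS (s : Set QAtom) : SimpleGraph ℕ where
  Adj x y := x ≠ y ∧ ∃ a ∈ s, x ∈ a.vars ∧ y ∈ a.vars
  symm := ⟨fun x y h => ⟨h.1.symm, h.2.imp fun a h' => ⟨h'.1, h'.2.2, h'.2.1⟩⟩⟩
  loopless := ⟨fun x h => h.1 rfl⟩

def CQConnectedS (s : Set QAtom) : Prop :=
  ∀ x ∈ qvarsS s, ∀ y ∈ qvarsS s, (queryGraphS s).Reachable x y

/-- Acyclic CQ: the query graph is acyclic, and every edge carries exactly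
one role atom. -/
def CQAcyclicS (s : Set QAtom) : Prop :=
  (queryGraphS s).IsAcyclic ∧
  ∀ x y, (queryGraphS s).Adj x y →
    ∃! a : QAtom, a ∈ s ∧ ∃ p, a = QAtom.ra p x y ∨ a = QAtom.ra p y x

/-- `q⁻`: the atoms of `Q` minus the role atoms connecting two c-variables. -/
def qminus (Q : OMQ) : Set QAtom :=
  {a | a ∈ Q.q.atoms ∧ ¬ ∃ p x y, a = QAtom.ra p x y ∧ isCVar Q x ∧ isCVar Q y}

/-- c-acyclicity: `q⁻` is acyclic and every connected component of `G(q⁻)`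
contains exactly one c-variable. -/
def cAcyclic (Q : OMQ) : Prop :=
  CQAcyclicS (qminus Q) ∧
  ∀ x ∈ qvarsS (qminus Q),
    ∃! y, y ∈ qvarsS (qminus Q) ∧ (queryGraphS (qminus Q)).Reachable x y ∧ isCVar Q y

/-- Instance query: a single atom, all of whose variables are answer variables. -/
def isInstanceQuery (q : CQuery) : Prop :=
  (∃ a : QAtom, q.atoms = [a]) ∧ ∀ v ∈ q.varSet, v ∈ q.ansVars

/-! ## Rooted tree presentations of acyclic CQs and query concepts -/

/-- Rooted trees presenting connected acyclic CQs: a node carries its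
variable, the concept names labelling it, and its children together with the
(possibly inverse) role connecting to them. -/
inductive QTree : Type
  | node : ℕ → List ℕ → List (DLRole × QTree) → QTree

def QTree.root : QTree → ℕ
  | .node x _ _ => x

def conjOfList : List DLConcept → DLConcept
  | [] => .top
  | C :: rest => .conj C (conjOfList rest)

mutual
  /-- The query concept `C_{q,x}` determined by a rooted tree presentation. -/
  def QTree.concept : QTree → DLConcept
    | .node _ cs children =>
        .conj (conjOfList (cs.map DLConcept.atom)) (QTree.childConcept children)
  def QTree.childConcept : List (DLRole × QTree) → DLConcept
    | [] => .top
    | (r, t) :: rest => .conj (.ex r (QTree.concept t)) (QTree.childConcept rest)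
end

/-- The role atom represented by a tree edge from `x` to `y` labelled `r`. -/
def edgeAtom (x : ℕ) (r : DLRole) (y : ℕ) : QAtom :=
  match r with
  | .name p => .ra p x y
  | .inv p => .ra p y x

mutual
  /-- The set of atoms represented by a tree. -/
  def QTree.atomSet : QTree → Set QAtom
    | .node x cs children =>
        {a | ∃ A ∈ cs, a = QAtom.ca A x} ∪ QTree.childAtomSet x children
  def QTree.childAtomSet : ℕ → List (DLRole × QTree) → Set QAtom
    | _, [] => ∅
    | x, (r, t) :: rest =>
        insert (edgeAtom x r t.root) (QTree.atomSet t) ∪ QTree.childAtomSet x rest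
end

mutual
  def QTree.varList : QTree → List ℕ
    | .node x _ children => x :: QTree.childVarList children
  def QTree.childVarList : List (DLRole × QTree) → List ℕ
    | [] => []
    | (_, t) :: rest => QTree.varList t ++ QTree.childVarList rest
end

/-- `t` is the rooted tree presentation of the CQ `q` (viewed as a set of
atoms) with root variable `x`. -/
def QTree.presents (t : QTree) (q : Set QAtom) (x : ℕ) : Prop :=
  t.root = x ∧ t.atomSet = q ∧ t.varList.Nodup
/-! ## Concept and role names occurring in an OMQ -/

def QAtom.cnames : QAtom → Set ℕ
  | .ca A _ => {A}
  | .ra _ _ _ => ∅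

def QAtom.rnames : QAtom → Set ℕ
  | .ca _ _ => ∅
  | .ra p _ _ => {p}

def OMQ.cnames (Q : OMQ) : Set ℕ := TBox.cnames Q.tbox ∪ ⋃ a ∈ Q.q.atoms, QAtom.cnames a
def OMQ.rnames (Q : OMQ) : Set ℕ := TBox.rnames Q.tbox ∪ ⋃ a ∈ Q.q.atoms, QAtom.rnames a
/-! # Cores and extensions -/

/-- The possible domain of a core for `K`: the individuals of `K` plus the
fringe individuals `c^α` for existential inclusions `α` of the TBox. -/
def coreDom (K : KB) : Set Elem :=
  {e | ∃ a ∈ K.inds, e = Elem.ind a} ∪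
  {e | ∃ a ∈ K.inds, ∃ α ∈ K.tbox, Inclusion.isExistential α ∧ e = Elem.fringe a α}

/-- A core for a KB with closed predicates (conditions (c1)--(c5)). -/
structure IsCore (Ic : Interp) (K : KB) : Prop where
  dom_sub : Ic.dom ⊆ coreDom K
  inds_sub : ∀ a ∈ K.inds, Elem.ind a ∈ Ic.dom
  sna : ∀ a ∈ K.inds, Ic.intI a = Elem.ind a
  c2 : Ic.satABoxClosed K.sig K.abox
  c3 : ∀ α ∈ K.tbox,
        (¬ α.isExistential → Ic.satIncl α) ∧
        (∀ A r A', α = exIncl A r A' → roleClosed K.tbox K.sig r → Ic.satIncl α)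
  c4 : ∀ p : ℕ, ∀ x ∈ Ic.intR p,
        (∃ a b, a ∈ K.inds ∧ b ∈ K.inds ∧ x = (Elem.ind a, Elem.ind b)) ∨
        (∃ a α, a ∈ K.inds ∧ x = (Elem.ind a, Elem.fringe a α)) ∨
        (∃ a α, a ∈ K.inds ∧ x = (Elem.fringe a α, Elem.ind a))
  c5 : ∀ e ∈ Ic.dom, ¬ e.isFringe →
        ∀ A r A', exIncl A r A' ∈ K.tbox → e ∈ Ic.intC A →
          e ∈ Ic.cExt (.ex r (.atom A'))

/-- `J` is an extension of the core `Ic` (with respect to the closed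
predicates `sig`). -/
structure IsExtension (J Ic : Interp) (sig : Set ClosedPred) : Prop where
  dom_sub : Ic.dom ⊆ J.dom
  cAgree : ∀ A : ℕ, Ic.intC A = J.intC A ∩ Ic.dom
  rAgree : ∀ p : ℕ, Ic.intR p = J.intR p ∩ (Ic.dom ×ˢ Ic.dom)
  closedC : ∀ A : ℕ, ClosedPred.cp A ∈ sig → J.intC A = Ic.intC A
  closedR : ∀ p : ℕ, ClosedPred.rp p ∈ sig → J.intR p = Ic.intR p

/-! # Types and the model building game -/

/-- The basic concepts occurring in a concept. -/
def DLConcept.basics : DLConcept → Set DLConcept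
  | .atom A => {.atom A}
  | .nom a => {.nom a}
  | .top => {.top}
  | .bot => {.bot}
  | .neg C => C.basics
  | .conj C D => C.basics ∪ D.basics
  | .disj C D => C.basics ∪ D.basics
  | .ex _ C => C.basics
  | .all _ C => C.basics

def Inclusion.basics : Inclusion → Set DLConcept
  | .concl C D => C.basics ∪ D.basics
  | .rolel _ _ => ∅

/-- `N_C⁺(T)`: the basic concepts occurring in `T`, together with `⊤`, `⊥`. -/
def TBox.basicConcepts (T : TBox) : Set DLConcept :=
  {DLConcept.top, DLConcept.bot} ∪ ⋃ α ∈ T, Inclusion.basics α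

/-- A type over `T`. -/
def IsType (T : TBox) (τ : Set DLConcept) : Prop :=
  τ ⊆ TBox.basicConcepts T ∧ DLConcept.top ∈ τ ∧ DLConcept.bot ∉ τ

/-- `type(e, I)`. -/
def typeOf (T : TBox) (I : Interp) (e : Elem) : Set DLConcept :=
  {B | B ∈ TBox.basicConcepts T ∧ e ∈ I.cExt B}

/-- `τ` is realized in `I`. -/
def realizedIn (T : TBox) (I : Interp) (τ : Set DLConcept) : Prop :=
  ∃ e ∈ I.dom, typeOf T I e = τ

def conjuncts : DLConcept → Set DLConcept
  | .conj C D => conjuncts C ∪ conjuncts D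
  | C => {C}

def disjuncts : DLConcept → Set DLConcept
  | .disj C D => disjuncts C ∪ disjuncts D
  | C => {C}

/-- `τ` satisfies an (N1) inclusion. -/
def typeSatN1 (τ : Set DLConcept) : Inclusion → Prop
  | .concl C D => conjuncts C ⊆ τ → ∃ B ∈ disjuncts D, B ∈ τ
  | .rolel _ _ => True

/-- c-types. -/
def IsCType (T : TBox) (sig : Set ClosedPred) (τ : Set DLConcept) : Prop :=
  (∃ a, DLConcept.nom a ∈ τ) ∨
  (∃ A, DLConcept.atom A ∈ τ ∧ ClosedPred.cp A ∈ sig) ∨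
  (∃ A r A', exIncl A r A' ∈ T ∧ roleClosed T sig r ∧ DLConcept.atom A ∈ τ)

/-- The locally consistent types `LC(T, Σ, I_c)`. -/
def LC (T : TBox) (sig : Set ClosedPred) (Ic : Interp) : Set (Set DLConcept) :=
  {τ | IsType T τ ∧ (∀ α ∈ T, IsN1 α → typeSatN1 τ α) ∧
       (IsCType T sig τ → realizedIn T Ic τ)}

/-- Conditions (C1) and (C2): `τ'` is a legal response to the challenge
`A ⊑ ∃r.A'` against the current type `τ`. -/
def LegalResponse (T : TBox) (A : ℕ) (r : DLRole) (A' : ℕ) (τ τ' : Set DLConcept) : Prop :=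
  DLConcept.atom A' ∈ τ' ∧
  ∀ A₁ s A₂, Inclusion.concl (.atom A₁) (.all s (.atom A₂)) ∈ T →
    (subRole T r s → DLConcept.atom A₁ ∈ τ → DLConcept.atom A₂ ∈ τ') ∧
    (subRole T r.invert s → DLConcept.atom A₁ ∈ τ' → DLConcept.atom A₂ ∈ τ)

/-- A strategy for Bob, as a partial function. -/
abbrev Strategy := Set DLConcept → Inclusion → Option (Set DLConcept)

/-- Well-formedness of a strategy: it is defined only on pairs of a non-c-type
`τ` and an existential inclusion of `T` triggered by `τ`, and returns a type
satisfying (C1) and (C2). -/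
def IsStrategy (T : TBox) (sig : Set ClosedPred) (str : Strategy) : Prop :=
  ∀ τ α τ', str τ α = some τ' →
    IsType T τ ∧ ¬ IsCType T sig τ ∧ IsType T τ' ∧
    ∃ A r A', α = exIncl A r A' ∧ α ∈ T ∧ DLConcept.atom A ∈ τ ∧
      LegalResponse T A r A' τ τ'

/-- A finite run `a α₁ τ₁ α₂ τ₂ ⋯`. -/
structure GRun where
  start : Elem
  steps : List (Inclusion × Set DLConcept)

/-- `tail(w)`. -/
def GRun.tail (T : TBox) (Ic : Interp) (w : GRun) : Set DLConcept :=
  match w.steps.getLast? with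
  | some s => s.2
  | none => typeOf T Ic w.start

/-- `w` is a (finite) run of the game on the core `Ic`: it starts at a fringe
individual of `Ic`, its inclusions are existential inclusions of `T`, its
types are types over `T`, and only its last type may be a c-type. -/
def IsRunOn (T : TBox) (sig : Set ClosedPred) (Ic : Interp) (w : GRun) : Prop :=
  (∃ c α, w.start = Elem.fringe c α) ∧ w.start ∈ Ic.dom ∧
  (∀ s ∈ w.steps, s.1 ∈ T ∧ s.1.isExistential ∧ IsType T s.2) ∧
  (∀ (i : ℕ) s, w.steps[i]? = some s → i + 1 < w.steps.length → ¬ IsCType T sig s.2)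

def FollowsFrom (str : Strategy) : Set DLConcept → List (Inclusion × Set DLConcept) → Prop
  | _, [] => True
  | τ, (α, τ') :: rest => str τ α = some τ' ∧ FollowsFrom str τ' rest

/-- `w` follows the strategy `str` on `Ic`. -/
def RunFollows (T : TBox) (Ic : Interp) (str : Strategy) (w : GRun) : Prop :=
  FollowsFrom str (typeOf T Ic w.start) w.steps

/-- A non-losing strategy for Bob on `Ic`. -/
def NonLosing (T : TBox) (sig : Set ClosedPred) (Ic : Interp) (str : Strategy) : Prop :=
  IsStrategy T sig str ∧
  ∀ w : GRun, IsRunOn T sig Ic w → RunFollows T Ic str w →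
    w.tail T Ic ∈ LC T sig Ic ∧
    (¬ IsCType T sig (w.tail T Ic) →
      ∀ A r A', exIncl A r A' ∈ T → DLConcept.atom A ∈ w.tail T Ic →
        ∃ τ', str (w.tail T Ic) (exIncl A r A') = some τ')

/-! # The marking algorithm -/

/-- The types marked by the type elimination algorithm `Mark(T, Σ, I_c)`:
the least set containing all types violating some (N1) inclusion, all
c-types not realized in `I_c`, and closed under the rule (M_∃): a type gets
marked if some existential inclusion triggered by it has all its legal
responses already marked. -/
inductive Marked (T : TBox) (sig : Set ClosedPred) (Ic : Interp) : Set DLConcept → Prop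
  | n1 {τ : Set DLConcept} : IsType T τ →
      (∃ α ∈ T, IsN1 α ∧ ¬ typeSatN1 τ α) → Marked T sig Ic τ
  | closed {τ : Set DLConcept} : IsType T τ → IsCType T sig τ →
      ¬ realizedIn T Ic τ → Marked T sig Ic τ
  | exStep {τ : Set DLConcept} {A : ℕ} {r : DLRole} {A' : ℕ} :
      IsType T τ → exIncl A r A' ∈ T → DLConcept.atom A ∈ τ →
      (∀ τ', IsType T τ' → LegalResponse T A r A' τ τ' → Marked T sig Ic τ') →
      Marked T sig Ic τ
/-! # Datalog with disjunction and negation, stable model semantics -/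

/-- Predicate symbols: the concept names (unary), the role names (binary),
the built-in inequality predicate, and auxiliary predicates. -/
inductive DPred : Type
  | concept : ℕ → DPred
  | role : ℕ → DPred
  | neq : DPred
  | aux : ℕ → DPred
  deriving DecidableEq

inductive DTerm : Type
  | var : ℕ → DTerm
  | const : ℕ → DTerm
  deriving DecidableEq

structure DAtom where
  pred : DPred
  args : List DTerm
  deriving DecidableEq

/-- Ground atoms (over the constants). -/
structure GAtom where
  pred : DPred
  args : List ℕ
  deriving DecidableEq

/-- A rule `h₁ ∨ ⋯ ∨ hₙ ← b₁, …, bₖ, not c₁, …, not cₘ`. -/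
structure DRule where
  head : List DAtom
  posBody : List DAtom
  negBody : List DAtom
  deriving DecidableEq

abbrev DProgram := List DRule

def DTerm.constOf : DTerm → Set ℕ
  | .var _ => ∅
  | .const c => {c}

def DTerm.varOf : DTerm → Set ℕ
  | .var v => {v}
  | .const _ => ∅

def DAtom.consts (a : DAtom) : Set ℕ := ⋃ t ∈ a.args, DTerm.constOf t
def DAtom.vars (a : DAtom) : Set ℕ := ⋃ t ∈ a.args, DTerm.varOf t
def DRule.atoms (ρ : DRule) : List DAtom := ρ.head ++ ρ.posBody ++ ρ.negBody
def DRule.consts (ρ : DRule) : Set ℕ := ⋃ a ∈ ρ.atoms, DAtom.consts a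
def DRule.vars (ρ : DRule) : Set ℕ := ⋃ a ∈ ρ.atoms, DAtom.vars a
def progConsts (P : DProgram) : Set ℕ := ⋃ ρ ∈ P, DRule.consts ρ

/-- Safety: every variable of the rule occurs in a positive body atom. -/
def DRule.safe (ρ : DRule) : Prop := ∀ v ∈ ρ.vars, ∃ a ∈ ρ.posBody, v ∈ a.vars

def safeProgram (P : DProgram) : Prop := ∀ ρ ∈ P, ρ.safe
def nonDisjunctive (P : DProgram) : Prop := ∀ ρ ∈ P, ρ.head.length ≤ 1
def positiveProgram (P : DProgram) : Prop := ∀ ρ ∈ P, ρ.negBody = []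
/-- No occurrence of the built-in inequality predicate. -/
def neqFree (P : DProgram) : Prop := ∀ ρ ∈ P, ∀ a ∈ ρ.atoms, a.pred ≠ DPred.neq

/-- Ground rules. -/
structure GRRule where
  head : List GAtom
  posBody : List GAtom
  negBody : List GAtom

def DTerm.subst (σ : ℕ → ℕ) : DTerm → ℕ
  | .var v => σ v
  | .const c => c

def DAtom.inst (σ : ℕ → ℕ) (a : DAtom) : GAtom := ⟨a.pred, a.args.map (DTerm.subst σ)⟩

def DRule.inst (σ : ℕ → ℕ) (ρ : DRule) : GRRule :=
  ⟨ρ.head.map (DAtom.inst σ), ρ.posBody.map (DAtom.inst σ), ρ.negBody.map (DAtom.inst σ)⟩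

/-- The grounding of a program: all instances of its rules over the
constants occurring in the program. -/
def grounding (P : DProgram) : Set GRRule :=
  {g | ∃ ρ ∈ P, ∃ σ : ℕ → ℕ, (∀ v ∈ DRule.vars ρ, σ v ∈ progConsts P) ∧ g = DRule.inst σ ρ}

/-- A constant occurring in a non-inequality atom of `I`. -/
def activeConst (I : Finset GAtom) (c : ℕ) : Prop :=
  ∃ g ∈ I, g.pred ≠ DPred.neq ∧ c ∈ g.args

/-- The built-in semantics of the inequality predicate: `a ≠ b` holds in `I`
iff `a` and `b` are distinct constants both occurring in non-inequality atoms
of `I`. -/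
def respectsNeq (I : Finset GAtom) : Prop :=
  ∀ args : List ℕ, (⟨DPred.neq, args⟩ : GAtom) ∈ I ↔
    ∃ a b : ℕ, args = [a, b] ∧ a ≠ b ∧ activeConst I a ∧ activeConst I b

/-- `I` is a (Herbrand) model of a set of positive ground rules. -/
def isHModel (I : Finset GAtom) (G : Set GRRule) : Prop :=
  respectsNeq I ∧ ∀ g ∈ G, (∀ b ∈ g.posBody, b ∈ I) → ∃ h ∈ g.head, h ∈ I

/-- The GL-reduct of a set of ground rules with respect to `I`. -/
def glReduct (G : Set GRRule) (I : Finset GAtom) : Set GRRule :=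
  {g' | ∃ g ∈ G, (∀ n ∈ g.negBody, n ∉ I) ∧ g' = ⟨g.head, g.posBody, []⟩}

/-- `I` is a stable model of `P`: a minimal model of the GL-reduct of the
grounding of `P` with respect to `I`. -/
def isStable (P : DProgram) (I : Finset GAtom) : Prop :=
  isHModel I (glReduct (grounding P) I) ∧
  ∀ J : Finset GAtom, isHModel J (glReduct (grounding P) I) → J ⊆ I → J = I

/-- ABox assertions as facts. -/
def assertFact : Assertion → DRule
  | .ca A a => ⟨[⟨DPred.concept A, [DTerm.const a]⟩], [], []⟩
  | .ra p a b => ⟨[⟨DPred.role p, [DTerm.const a, DTerm.const b]⟩], [], []⟩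

def aboxFacts (Ab : ABox) : DProgram := Ab.map assertFact

/-- Ground atoms as facts. -/
def gfact (g : GAtom) : DRule := ⟨[⟨g.pred, g.args.map DTerm.const⟩], [], []⟩

def factProg (F : List GAtom) : DProgram := F.map gfact

def GAtom.rename (ρ : ℕ → ℕ) (g : GAtom) : GAtom := ⟨g.pred, g.args.map ρ⟩

def gconsts (F : List GAtom) : Set ℕ := ⋃ g ∈ F, {c | c ∈ g.args}

/-- `t` is a certain answer to the query `(P, q̂)` over the database `D`:
`q̂(t)` belongs to every stable model of `P ∪ D`. -/
def certD (P : DProgram) (qp : DPred) (D : DProgram) (t : List ℕ) : Prop :=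
  ∀ I : Finset GAtom, isStable (P ++ D) I → (⟨qp, t⟩ : GAtom) ∈ I

/-! ## Auxiliary lemmas for Statement 16 -/

section Stmt16Aux

lemma finite_listsOver (s : Set ℕ) (hs : s.Finite) :
    ∀ n : ℕ, {l : List ℕ | l.length = n ∧ ∀ c ∈ l, c ∈ s}.Finite := by
  intro n
  induction n with
  | zero =>
    apply Set.Finite.subset (Set.finite_singleton ([] : List ℕ))
    rintro l ⟨hl, -⟩
    simpa using List.length_eq_zero_iff.1 hl
  | succ n ih =>
    apply Set.Finite.subset ((hs.prod ih).image (fun p : ℕ × List ℕ => p.1 :: p.2))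
    rintro l ⟨hl, hmem⟩
    cases l with
    | nil => simp at hl
    | cons c l' =>
      refine ⟨(c, l'), ⟨hmem c (by simp), ?_, fun d hd => hmem d (by simp [hd])⟩, rfl⟩
      simpa using hl

lemma mem_progConsts {P : DProgram} {ρ : DRule} (hρ : ρ ∈ P) {c : ℕ}
    (hc : c ∈ DRule.consts ρ) : c ∈ progConsts P := by
  simp only [progConsts, Set.mem_iUnion]
  exact ⟨ρ, hρ, hc⟩

lemma mem_rule_consts {ρ : DRule} {a : DAtom} (ha : a ∈ ρ.atoms) {c : ℕ}
    (hc : DTerm.const c ∈ a.args) : c ∈ DRule.consts ρ := by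
  simp only [DRule.consts, DAtom.consts, Set.mem_iUnion]
  exact ⟨a, ha, DTerm.const c, hc, by simp [DTerm.constOf]⟩

lemma mem_rule_vars {ρ : DRule} {a : DAtom} (ha : a ∈ ρ.atoms) {v : ℕ}
    (hv : DTerm.var v ∈ a.args) : v ∈ DRule.vars ρ := by
  simp only [DRule.vars, DAtom.vars, Set.mem_iUnion]
  exact ⟨a, ha, DTerm.var v, hv, by simp [DTerm.varOf]⟩

lemma finite_progConsts (P : DProgram) : (progConsts P).Finite := by
  have : progConsts P = ⋃ ρ ∈ {ρ | ρ ∈ P}, DRule.consts ρ := rfl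
  rw [this]
  apply Set.Finite.biUnion (List.finite_toSet P)
  intro ρ _
  have : DRule.consts ρ = ⋃ a ∈ {a | a ∈ ρ.atoms}, DAtom.consts a := rfl
  rw [this]
  apply Set.Finite.biUnion (List.finite_toSet ρ.atoms)
  intro a _
  have : DAtom.consts a = ⋃ t ∈ {t | t ∈ a.args}, DTerm.constOf t := rfl
  rw [this]
  apply Set.Finite.biUnion (List.finite_toSet a.args)
  intro t _
  cases t <;> simp [DTerm.constOf]

lemma progConsts_append (P Q : DProgram) :
    progConsts (P ++ Q) = progConsts P ∪ progConsts Q := by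
  ext c
  simp only [progConsts, Set.mem_iUnion, Set.mem_union, List.mem_append]
  constructor
  · rintro ⟨ρ, hρ | hρ, hc⟩
    · exact Or.inl ⟨ρ, hρ, hc⟩
    · exact Or.inr ⟨ρ, hρ, hc⟩
  · rintro (⟨ρ, hρ, hc⟩ | ⟨ρ, hρ, hc⟩)
    · exact ⟨ρ, Or.inl hρ, hc⟩
    · exact ⟨ρ, Or.inr hρ, hc⟩

lemma progConsts_single_ca (A a : ℕ) :
    progConsts (aboxFacts [Assertion.ca A a]) = {a} := by
  ext c
  simp [progConsts, aboxFacts, assertFact, DRule.consts, DRule.atoms, DAtom.consts,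
    DTerm.constOf]

lemma rename_inst (h : ℕ → ℕ) (σ : ℕ → ℕ) (a : DAtom)
    (hfix : ∀ c, DTerm.const c ∈ a.args → h c = c) :
    GAtom.rename h (DAtom.inst σ a) = DAtom.inst (fun v => h (σ v)) a := by
  unfold GAtom.rename DAtom.inst
  simp only [List.map_map]
  congr 1
  apply List.map_congr_left
  intro t ht
  cases t with
  | var v => rfl
  | const c => simpa [Function.comp, DTerm.subst] using hfix c ht

lemma grounding_negBody {P : DProgram} (hpos : positiveProgram P) {g : GRRule}
    (hg : g ∈ grounding P) : g.negBody = [] := by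
  obtain ⟨ρ, hρ, σ, -, rfl⟩ := hg
  simp [DRule.inst, hpos ρ hρ]

lemma glReduct_eq {P : DProgram} (hpos : positiveProgram P) (X Y : Finset GAtom) :
    glReduct (grounding P) X = glReduct (grounding P) Y := by
  ext g'
  constructor <;>
  · rintro ⟨g, hg, -, rfl⟩
    exact ⟨g, hg, by simp [grounding_negBody hpos hg], rfl⟩

lemma positive_append_abox {P : DProgram} (hpos : positiveProgram P) (Ab : ABox) :
    positiveProgram (P ++ aboxFacts Ab) := by
  intro ρ hρ
  rcases List.mem_append.1 hρ with h | h
  · exact hpos ρ h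
  · obtain ⟨β, -, rfl⟩ := List.mem_map.1 h
    cases β <;> rfl

lemma exists_stable_subset {P : DProgram} (hpos : positiveProgram P)
    {I : Finset GAtom} (hI : isHModel I (glReduct (grounding P) I)) :
    ∃ I₀ : Finset GAtom, I₀ ⊆ I ∧ isStable P I₀ := by
  classical
  have hex : ∃ n, ∃ X : Finset GAtom,
      X ⊆ I ∧ isHModel X (glReduct (grounding P) X) ∧ X.card = n :=
    ⟨I.card, I, le_refl _, hI, rfl⟩
  obtain ⟨X, hXI, hXmod, hXcard⟩ := Nat.find_spec hex
  refine ⟨X, hXI, hXmod, ?_⟩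
  intro J hJmod hJX
  have hJmod' : isHModel J (glReduct (grounding P) J) := by
    rwa [glReduct_eq hpos J X]
  have hmin : Nat.find hex ≤ J.card := Nat.find_min' hex ⟨J, hJX.trans hXI, hJmod', rfl⟩
  exact Finset.eq_of_subset_of_card_le hJX (hXcard ▸ hmin)

end Stmt16Aux

section Stmt16Key

/-- The key transfer lemma: if `J` is a stable model of `P ∪ {A(0)}` and
`q̂(b,b)` is a certain answer of `(P, q̂)` over `{A(b)}` for a fresh constant
`b`, then `q̂(0,0) ∈ J`.  Pull back `J` along the collapse `b ↦ 0`. -/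
lemma stmt16_key {P : DProgram} (hpos : positiveProgram P) (hnf : neqFree P)
    {b : ℕ} (hb0 : b ≠ 0) (hbP : b ∉ progConsts P) {qp : DPred}
    {J : Finset GAtom}
    (hJst : isStable (P ++ aboxFacts [Assertion.ca 0 0]) J)
    (hcert : certD P qp (aboxFacts [Assertion.ca 0 b]) [b, b]) :
    (⟨qp, [0, 0]⟩ : GAtom) ∈ J := by
  classical
  set h : ℕ → ℕ := fun c => if c = b then 0 else c with hh
  set D : DProgram := aboxFacts [Assertion.ca 0 b] with hD
  set D' : DProgram := aboxFacts [Assertion.ca 0 0] with hD'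
  set Kset : Set ℕ := progConsts (P ++ D) with hKset
  have hKeq : Kset = progConsts P ∪ {b} := by
    rw [hKset, progConsts_append, hD, progConsts_single_ca]
  have hK : Kset.Finite := by
    rw [hKeq]; exact (finite_progConsts P).union (Set.finite_singleton b)
  have hK'eq : progConsts (P ++ D') = progConsts P ∪ {0} := by
    rw [hD', progConsts_append, progConsts_single_ca]
  have hfixP : ∀ c ∈ progConsts P, h c = c := by
    intro c hc
    simp only [hh]
    exact if_neg (fun hcb => hbP (by rwa [hcb] at hc))
  have hhb : h b = 0 := by simp [hh]
  -- the pulled-back interpretation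
  set Part1 : Set GAtom :=
    {g | g.pred ≠ DPred.neq ∧ (∀ c ∈ g.args, c ∈ Kset) ∧ GAtom.rename h g ∈ J}
    with hPart1def
  set activeS : ℕ → Prop := fun c => ∃ g ∈ Part1, c ∈ g.args with hactSdef
  set Part2 : Set GAtom :=
    {g | ∃ a c, a ≠ c ∧ g = ⟨DPred.neq, [a, c]⟩ ∧ activeS a ∧ activeS c}
    with hPart2def
  have hactK : ∀ c, activeS c → c ∈ Kset := by
    rintro c ⟨g, hg, hc⟩
    exact hg.2.1 c hc
  have hPart1fin : Part1.Finite := by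
    apply Set.Finite.subset (Set.Finite.biUnion J.finite_toSet
      (fun j _ => ((finite_listsOver Kset hK j.args.length).image
        (fun l => GAtom.mk j.pred l))))
    rintro ⟨p, args⟩ ⟨hp, hargs, hmem⟩
    refine Set.mem_biUnion hmem ⟨args, ⟨?_, hargs⟩, rfl⟩
    simp [GAtom.rename]
  have hPart2fin : Part2.Finite := by
    apply Set.Finite.subset ((hK.prod hK).image
      (fun p : ℕ × ℕ => GAtom.mk DPred.neq [p.1, p.2]))
    rintro g ⟨a, c, hne, rfl, ha, hc⟩
    exact ⟨(a, c), ⟨hactK _ ha, hactK _ hc⟩, rfl⟩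
  set I : Finset GAtom := (hPart1fin.union hPart2fin).toFinset with hIdef
  have hmemI : ∀ g, g ∈ I ↔ g ∈ Part1 ∨ g ∈ Part2 := by
    intro g; rw [hIdef, Set.Finite.mem_toFinset]; rfl
  have hactive : ∀ c, activeConst I c ↔ activeS c := by
    intro c
    constructor
    · rintro ⟨g, hgI, hgpred, hc⟩
      rcases (hmemI g).1 hgI with hg1 | hg2
      · exact ⟨g, hg1, hc⟩
      · obtain ⟨a, c', -, rfl, -, -⟩ := hg2
        exact absurd rfl hgpred
    · rintro ⟨g, hg1, hc⟩
      exact ⟨g, (hmemI g).2 (Or.inl hg1), hg1.1, hc⟩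
  have hneqI : respectsNeq I := by
    intro args
    constructor
    · intro hmem
      rcases (hmemI _).1 hmem with hg1 | hg2
      · exact absurd rfl hg1.1
      · obtain ⟨a, c, hne, heq, ha, hc⟩ := hg2
        have hargs : args = [a, c] := congrArg GAtom.args heq
        exact ⟨a, c, hargs, hne, (hactive a).2 ha, (hactive c).2 hc⟩
    · rintro ⟨a, c, rfl, hne, ha, hc⟩
      exact (hmemI _).2 (Or.inr ⟨a, c, hne, rfl, (hactive a).1 ha, (hactive c).1 hc⟩)
  -- I is a model of the reduct of the grounding of P ++ D
  have hmodel : isHModel I (glReduct (grounding (P ++ D)) I) := by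
    refine ⟨hneqI, ?_⟩
    rintro g' ⟨g, hg, -, rfl⟩ hbody
    obtain ⟨ρ, hρ, σ, hσ, rfl⟩ := hg
    rcases List.mem_append.1 hρ with hρP | hρD
    · -- rule of P
      have hfixρ : ∀ (a : DAtom), a ∈ ρ.atoms → ∀ c, DTerm.const c ∈ a.args → h c = c :=
        fun a ha c hc => hfixP c (mem_progConsts hρP (mem_rule_consts ha hc))
      set σ' : ℕ → ℕ := fun v => h (σ v) with hσ'def
      have hσ' : ∀ v ∈ DRule.vars ρ, σ' v ∈ progConsts (P ++ D') := by
        intro v hv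
        have : σ v ∈ Kset := hσ v hv
        rw [hKeq] at this
        rw [hK'eq]
        rcases this with hc | hc
        · exact Or.inl (by show h (σ v) ∈ progConsts P; rw [hfixP _ hc]; exact hc)
        · rw [Set.mem_singleton_iff] at hc
          exact Or.inr (by simp [hσ'def, hc, hhb])
      have hg₂ : DRule.inst σ' ρ ∈ grounding (P ++ D') :=
        ⟨ρ, List.mem_append_left _ hρP, σ', hσ', rfl⟩
      have hg₂' : (⟨(DRule.inst σ' ρ).head, (DRule.inst σ' ρ).posBody, []⟩ : GRRule)
          ∈ glReduct (grounding (P ++ D')) J := by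
        refine ⟨_, hg₂, ?_, rfl⟩
        intro n hn
        rw [grounding_negBody (positive_append_abox hpos _) hg₂] at hn
        simp at hn
      have hbodyJ : ∀ x ∈ (DRule.inst σ' ρ).posBody, x ∈ J := by
        intro x hx
        obtain ⟨β, hβ, rfl⟩ := List.mem_map.1 hx
        have hβatoms : β ∈ ρ.atoms := by
          simp [DRule.atoms]
          tauto
        have hβI : DAtom.inst σ β ∈ I := hbody _ (List.mem_map_of_mem hβ)
        have hβ1 : DAtom.inst σ β ∈ Part1 := by
          rcases (hmemI _).1 hβI with h1 | h2
          · exact h1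
          · obtain ⟨a, c, -, heq, -, -⟩ := h2
            have : β.pred = DPred.neq := congrArg GAtom.pred heq
            exact absurd this (hnf ρ hρP β hβatoms)
        have := hβ1.2.2
        rwa [rename_inst h σ β (hfixρ β hβatoms)] at this
      obtain ⟨hd₂, hhd₂mem, hhd₂J⟩ := hJst.1.2 _ hg₂' hbodyJ
      obtain ⟨η, hη, rfl⟩ := List.mem_map.1 hhd₂mem
      have hηatoms : η ∈ ρ.atoms := by
        simp [DRule.atoms]
        tauto
      refine ⟨DAtom.inst σ η, List.mem_map_of_mem hη, ?_⟩
      refine (hmemI _).2 (Or.inl ⟨hnf ρ hρP η hηatoms, ?_, ?_⟩)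
      · intro c hc
        obtain ⟨t, ht, rfl⟩ := List.mem_map.1 hc
        cases t with
        | var v => exact hσ v (mem_rule_vars hηatoms ht)
        | const c =>
          rw [hKeq]
          exact Or.inl (mem_progConsts hρP (mem_rule_consts hηatoms ht))
      · rwa [rename_inst h σ η (hfixρ η hηatoms)]
    · -- the fact A(b)
      have hρeq : ρ = ⟨[⟨DPred.concept 0, [DTerm.const b]⟩], [], []⟩ := by
        simp [hD, aboxFacts, assertFact] at hρD
        exact hρD
      subst hρeq
      -- the corresponding fact A(0) gives the renamed atom in J
      have hfact : (⟨[⟨DPred.concept 0, [(0 : ℕ)]⟩], [], []⟩ : GRRule)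
          ∈ glReduct (grounding (P ++ D')) J := by
        refine ⟨DRule.inst σ (assertFact (Assertion.ca 0 0)), ⟨assertFact (Assertion.ca 0 0),
          List.mem_append_right _ (by simp [hD', aboxFacts]), σ, ?_, rfl⟩, ?_, ?_⟩
        · intro v hv
          simp [DRule.vars, DRule.atoms, assertFact, DAtom.vars, DTerm.varOf] at hv
        · intro n hn
          simp [assertFact, DRule.inst] at hn
        · simp [assertFact, DRule.inst, DAtom.inst, DTerm.subst]
      obtain ⟨hd, hhd, hhdJ⟩ := hJst.1.2 _ hfact (by intro x hx; simp at hx)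
      simp only [List.mem_singleton] at hhd
      subst hhd
      refine ⟨⟨DPred.concept 0, [b]⟩, ?_, ?_⟩
      · simp [DRule.inst, DAtom.inst, DTerm.subst]
      · refine (hmemI _).2 (Or.inl ⟨by simp, ?_, ?_⟩)
        · intro c hc
          simp at hc
          rw [hc, hKeq]
          exact Or.inr rfl
        · simpa [GAtom.rename, hhb] using hhdJ
  obtain ⟨I₀, hI₀sub, hI₀st⟩ := exists_stable_subset (positive_append_abox hpos _) hmodel
  have hq : (⟨qp, [b, b]⟩ : GAtom) ∈ I₀ := hcert I₀ hI₀st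
  by_cases hqneq : qp = DPred.neq
  · subst hqneq
    obtain ⟨a, c, heq, hne, -, -⟩ := (hI₀st.1.1 [b, b]).1 hq
    have ha : a = b := by simpa using congrArg (fun l => l.headI) heq.symm
    have hc : c = b := by
      have := congrArg (fun l => l.tail.headI) heq
      simpa using this.symm
    exact absurd (ha ▸ hc ▸ rfl) hne
  · have hqI : (⟨qp, [b, b]⟩ : GAtom) ∈ I := hI₀sub hq
    have hq1 : (⟨qp, [b, b]⟩ : GAtom) ∈ Part1 := by
      rcases (hmemI _).1 hqI with h1 | h2
      · exact h1
      · obtain ⟨a, c, -, heq, -, -⟩ := h2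
        exact absurd (congrArg GAtom.pred heq) hqneq
    have := hq1.2.2
    simpa [GAtom.rename, hhb] using this
  
end Stmt16Key

section Stmt16Final

/-- The instance query `r₀(x, y)`. -/
def stmt16Q : CQuery where
  atoms := [QAtom.ra 0 0 1]
  ansVars := [0, 1]
  ansVars_mem := by
    intro x hx
    refine Set.mem_biUnion (show QAtom.ra 0 0 1 ∈ {a : QAtom | a ∈ [QAtom.ra 0 0 1]} by simp) ?_
    simp [QAtom.vars] at hx ⊢
    tauto

/-- The canonical model of `({A ⊑ {a}}, ∅, {A(a)})` with empty roles. -/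
def stmt16Model : Interp where
  dom := {Elem.ind 0}
  dom_nonempty := ⟨Elem.ind 0, rfl⟩
  intC := fun _ => {Elem.ind 0}
  intR := fun _ => ∅
  intI := fun _ => Elem.ind 0
  intC_sub := fun _ => le_refl _
  intR_sub := fun _ x hx => absurd hx (Set.notMem_empty x)
  intI_mem := fun _ => rfl

lemma stmt16_isModel :
    isModel stmt16Model ⟨[Inclusion.concl (DLConcept.atom 0) (DLConcept.nom 0)], ∅,
      [Assertion.ca 0 0]⟩ := by
  refine ⟨?_, ?_, ?_, ?_, ?_⟩
  · intro a ha
    have ha0 : a = 0 := by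
      simp [KB.inds, Inclusion.noms, DLConcept.noms, Assertion.inds] at ha
      tauto
    subst ha0
    exact ⟨rfl, rfl⟩
  · intro α hα
    simp at hα
    subst hα
    show stmt16Model.cExt (DLConcept.atom 0) ⊆ stmt16Model.cExt (DLConcept.nom 0)
    intro e he
    simp [Interp.cExt, stmt16Model] at he ⊢
    exact he
  · intro β hβ
    simp at hβ
    subst hβ
    show stmt16Model.intI 0 ∈ stmt16Model.intC 0
    rfl
  · intro A hA
    exact absurd hA (Set.notMem_empty _)
  · intro p hp
    exact absurd hp (Set.notMem_empty _)

lemma stmt16_no_model {b : ℕ} (hb : b ≠ 0) :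
    ¬ ∃ I : Interp, isModel I ⟨[Inclusion.concl (DLConcept.atom 0) (DLConcept.nom 0)], ∅,
      [Assertion.ca 0 b]⟩ := by
  rintro ⟨I, hsna, hT, hA, -⟩
  have h0 : (0 : ℕ) ∈ KB.inds ⟨[Inclusion.concl (DLConcept.atom 0) (DLConcept.nom 0)], ∅,
      [Assertion.ca 0 b]⟩ := by
    simp [KB.inds, Inclusion.noms, DLConcept.noms, Assertion.inds]
  have hbi : b ∈ KB.inds ⟨[Inclusion.concl (DLConcept.atom 0) (DLConcept.nom 0)], ∅,
      [Assertion.ca 0 b]⟩ := by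
    simp [KB.inds, Inclusion.noms, DLConcept.noms, Assertion.inds]
  have hincl := hT _ (by simp : Inclusion.concl (DLConcept.atom 0) (DLConcept.nom 0) ∈ _)
  have hassert : I.intI b ∈ I.intC 0 := hA _ (by simp : Assertion.ca 0 b ∈ _)
  have : I.intI b ∈ I.cExt (DLConcept.nom 0) := hincl hassert
  simp [Interp.cExt] at this
  rw [(hsna b hbi).1, (hsna 0 h0).1] at this
  exact hb (by simpa using this)

lemma stmt16_certOMQ_inconsistent {b : ℕ} (hb : b ≠ 0) :
    certOMQ ⟨[Inclusion.concl (DLConcept.atom 0) (DLConcept.nom 0)], ∅, stmt16Q⟩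
      [Assertion.ca 0 b] [b, b] := by
  refine ⟨rfl, ?_, ?_⟩
  · intro a ha
    simp at ha
    subst ha
    simp [OMQ.kb, KB.inds, Assertion.inds]
  · intro I hI
    exact absurd ⟨I, hI⟩ (stmt16_no_model hb)

lemma stmt16_not_certOMQ :
    ¬ certOMQ ⟨[Inclusion.concl (DLConcept.atom 0) (DLConcept.nom 0)], ∅, stmt16Q⟩
      [Assertion.ca 0 0] [0, 0] := by
  rintro ⟨-, -, hent⟩
  obtain ⟨π, -, -, hatoms⟩ := hent stmt16Model stmt16_isModel
  have := hatoms (QAtom.ra 0 0 1) (by simp [stmt16Q])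
  exact absurd this (Set.notMem_empty _)

end Stmt16Final

/-- `≠`-free positive disjunctive Datalog programs cannot
capture instance queries mediated by ALCHOI TBoxes with nominals: for the
TBox `T = {A ⊑ {a}}` (which contains a nominal) there is an instance query
`q` such that no `≠`-free positive disjunctive Datalog program `P` and
predicate `q̂` satisfy `cert((T, ∅, q), A) = cert((P, q̂), A)` for all ABoxes
`A` over the concept and role names of `T`. In particular, `T` is consistent
with the ABox `{A(a)}` but inconsistent with `{A(b)}` for any individual
`b ≠ a`. -/
theorem stmt16_no_neqfree_rewriting :
    ∃ (T : TBox) (q : CQuery),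
      T = [Inclusion.concl (DLConcept.atom 0) (DLConcept.nom 0)] ∧
      (∃ α ∈ T, (Inclusion.noms α).Nonempty) ∧
      isInstanceQuery q ∧
      (∀ P : DProgram, safeProgram P → positiveProgram P → neqFree P →
        ∀ qp : DPred,
          ¬ ∀ Ab : ABox, ABoxOver Ab (TBox.cnames T) (TBox.rnames T) →
              ∀ t : List ℕ,
                (certOMQ ⟨T, ∅, q⟩ Ab t ↔ certD P qp (aboxFacts Ab) t)) ∧
      (∃ I : Interp, isModel I ⟨T, ∅, [Assertion.ca 0 0]⟩) ∧
      (∀ b : ℕ, b ≠ 0 → ¬ ∃ I : Interp, isModel I ⟨T, ∅, [Assertion.ca 0 b]⟩) := by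
  
  refine ⟨[Inclusion.concl (DLConcept.atom 0) (DLConcept.nom 0)], stmt16Q, rfl,
    ⟨Inclusion.concl (DLConcept.atom 0) (DLConcept.nom 0), by simp,
      ⟨0, by simp [Inclusion.noms, DLConcept.noms]⟩⟩,
    ⟨⟨QAtom.ra 0 0 1, rfl⟩, ?_⟩, ?_, ⟨stmt16Model, stmt16_isModel⟩,
    fun b hb => stmt16_no_model hb⟩
  · intro v hv
    simp [CQuery.varSet, CQuery.atomSet, qvarsS, stmt16Q, QAtom.vars] at hv
    simp [stmt16Q]
    tauto
  · intro P hsafe hpos hnf qp Hcap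
    obtain ⟨b, hb⟩ := Set.Infinite.nonempty
      (Set.Finite.infinite_compl ((finite_progConsts P).union (Set.finite_singleton 0)))
    have hbP : b ∉ progConsts P := fun h => hb (Set.mem_union_left _ h)
    have hb0 : b ≠ 0 := fun h => hb (Set.mem_union_right _ h)
    have hover : ∀ m : ℕ, ABoxOver [Assertion.ca 0 m]
        (TBox.cnames [Inclusion.concl (DLConcept.atom 0) (DLConcept.nom 0)])
        (TBox.rnames [Inclusion.concl (DLConcept.atom 0) (DLConcept.nom 0)]) := by
      intro m β hβ
      simp at hβ
      subst hβ
      show (0:ℕ) ∈ TBox.cnames _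
      simp [TBox.cnames, Inclusion.cnames, DLConcept.cnames]
    have hnc : ¬ certD P qp (aboxFacts [Assertion.ca 0 0]) [0, 0] :=
      fun hc => stmt16_not_certOMQ ((Hcap [Assertion.ca 0 0] (hover 0) [0, 0]).2 hc)
    unfold certD at hnc
    push_neg at hnc
    obtain ⟨J, hJst, hJnot⟩ := hnc
    have hc2 : certD P qp (aboxFacts [Assertion.ca 0 b]) [b, b] :=
      (Hcap [Assertion.ca 0 b] (hover b) [b, b]).1 (stmt16_certOMQ_inconsistent hb0)
    exact hJnot (stmt16_key hpos hnf hb0 hbP hJst hc2)
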